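/- arXiv:2305.16074 — 7 statements merged into one kernel-verified Lean document; each statement's English description precedes it below -/
import Mathlib

section
/- The function r(p, v) = Σ_{i=1}^k v_i p_i ∏_{j<i} (1 - p_j), defined for p, v ∈ [0,1]^k with v_1 ≥ v_2 ≥ ... ≥ v_k, is monotonically nondecreasing in each coordinate p_i. -/
open Finset

private lemma reward_step {k : ℕ} (p v : Fin (k+1) → ℝ) :
    ∑ i, v i * p i * ∏ j ∈ univ.filter (fun j => j < i), (1 - p j)
      = v 0 * p 0 + (1 - p 0) *
        ∑ i : Fin k, v i.succ * p i.succ *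
          ∏ j ∈ univ.filter (fun j => j < i), (1 - p j.succ) := by
  rw [Fin.sum_univ_succ]
  congr 1
  · have : univ.filter (fun j : Fin (k+1) => j < 0) = ∅ := by
      apply filter_eq_empty_iff.2; intro j _; exact (Fin.not_lt_zero j)
    rw [this]; simp
  · rw [Finset.mul_sum]
    apply Finset.sum_congr rfl
    intro i _
    rw [Finset.prod_filter, Fin.prod_univ_succ, ← Finset.prod_filter]
    have h0 : (0 : Fin (k+1)) < i.succ := i.succ_pos
    simp only [h0, if_true]
    simp only [Fin.succ_lt_succ_iff]
    ring

private lemma reward_le_bound {k : ℕ} (p v : Fin k → ℝ)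
    (hp : ∀ i, p i ∈ Set.Icc (0:ℝ) 1) (B : ℝ) (hB : 0 ≤ B)
    (hvB : ∀ i, v i ≤ B) :
    ∑ i, v i * p i * ∏ j ∈ univ.filter (fun j => j < i), (1 - p j) ≤ B := by
  induction k with
  | zero => simpa using hB
  | succ n ih =>
    rw [reward_step]
    have hR : ∑ i : Fin n, v i.succ * p i.succ *
        ∏ j ∈ univ.filter (fun j => j < i), (1 - p j.succ) ≤ B :=
      ih (fun i => p i.succ) (fun i => v i.succ) (fun i => hp i.succ)
        (fun i => hvB i.succ)
    have h0 := hp 0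
    have hv0 := hvB 0
    obtain ⟨h01, h02⟩ := h0
    nlinarith [hR, h01, h02, hv0]

theorem reward_monotone_in_p
    {k : ℕ} (p p' v : Fin k → ℝ)
    (hp : ∀ i, p i ∈ Set.Icc (0:ℝ) 1) (hp' : ∀ i, p' i ∈ Set.Icc (0:ℝ) 1)
    (hv : ∀ i, v i ∈ Set.Icc (0:ℝ) 1)
    (hvmono : ∀ i j : Fin k, i ≤ j → v j ≤ v i)
    (hle : ∀ i, p i ≤ p' i) :
    ∑ i, v i * p i * ∏ j ∈ univ.filter (fun j => j < i), (1 - p j)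
      ≤ ∑ i, v i * p' i * ∏ j ∈ univ.filter (fun j => j < i), (1 - p' j) := by
  induction k with
  | zero => simp
  | succ n ih =>
    rw [reward_step p v, reward_step p' v]
    have hIH : ∑ i : Fin n, v i.succ * p i.succ *
        ∏ j ∈ univ.filter (fun j => j < i), (1 - p j.succ)
        ≤ ∑ i : Fin n, v i.succ * p' i.succ *
        ∏ j ∈ univ.filter (fun j => j < i), (1 - p' j.succ) :=
      ih (fun i => p i.succ) (fun i => p' i.succ) (fun i => v i.succ)
        (fun i => hp i.succ) (fun i => hp' i.succ) (fun i => hv i.succ)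
        (fun i j hij => hvmono i.succ j.succ (Fin.succ_le_succ_iff.2 hij))
        (fun i => hle i.succ)
    have hR' : ∑ i : Fin n, v i.succ * p' i.succ *
        ∏ j ∈ univ.filter (fun j => j < i), (1 - p' j.succ) ≤ v 0 :=
      reward_le_bound _ _ (fun i => hp' i.succ) (v 0) (hv 0).1
        (fun i => hvmono 0 i.succ (Fin.zero_le _))
    obtain ⟨hp0, hp1⟩ := hp 0
    obtain ⟨hp'0, hp'1⟩ := hp' 0
    nlinarith [hIH, hR', hle 0, hp0, hp1, hp'0, hp'1]
end

section
/- (RTPM smoothness) Let p, p', v, v' ∈ [0,1]^k with v_1 ≥ ... ≥ v_k and v'_1 ≥ ... ≥ v'_k, and define r(p,v) = Σ_{i=1}^k v_i p_i ∏_{j<i}(1-p_j), q_i(p) = ∏_{j<i}(1-p_j), and q̃_i(p) = p_i ∏_{j<i}(1-p_j). Then |r(p,v) - r(p',v')| ≤ 2 Σ_{i=1}^k q_i(p) v'_i |p_i - p'_i| + Σ_{i=1}^k q̃_i(p) |v_i - v'_i|. -/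
open Finset

lemma rtpm_geom_sum (b : ℕ → ℝ) (m : ℕ) : ∀ n : ℕ,
    ∑ i ∈ Ico m n, b i * ∏ l ∈ Ico m i, (1 - b l)
      = 1 - ∏ l ∈ Ico m n, (1 - b l) := by
  intro n
  induction n with
  | zero => simp [Finset.Ico_eq_empty (by omega : ¬ m < 0)]
  | succ n ih =>
    by_cases h : m ≤ n
    · rw [Finset.sum_Ico_succ_top h, Finset.prod_Ico_succ_top h, ih]; ring
    · have h1 : Ico m (n+1) = ∅ := Finset.Ico_eq_empty (by omega)
      simp [h1]

lemma rtpm_prod_diff (a b : ℕ → ℝ) (i : ℕ) :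
    ∏ j ∈ range i, (1 - a j) - ∏ j ∈ range i, (1 - b j)
      = ∑ j ∈ range i, (∏ l ∈ range j, (1 - a l)) * (b j - a j)
          * ∏ l ∈ Ico (j+1) i, (1 - b l) := by
  induction i with
  | zero => simp
  | succ i ih =>
    rw [Finset.sum_range_succ, prod_range_succ, prod_range_succ]
    have e : ∑ j ∈ range i, (∏ l ∈ range j, (1 - a l)) * (b j - a j)
          * ∏ l ∈ Ico (j+1) (i+1), (1 - b l)
        = (∑ j ∈ range i, (∏ l ∈ range j, (1 - a l)) * (b j - a j)
          * ∏ l ∈ Ico (j+1) i, (1 - b l)) * (1 - b i) := by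
      rw [Finset.sum_mul]
      refine Finset.sum_congr rfl fun j hj => ?_
      rw [Finset.prod_Ico_succ_top (Nat.succ_le_of_lt (mem_range.mp hj))]; ring
    rw [e, ← ih, Ico_self, Finset.prod_empty]
    ring

lemma rtpm_main (k : ℕ) (a b c d : ℕ → ℝ)
    (ha : ∀ i, a i ∈ Set.Icc (0:ℝ) 1) (hb : ∀ i, b i ∈ Set.Icc (0:ℝ) 1)
    (hd : ∀ i, d i ∈ Set.Icc (0:ℝ) 1)
    (hdm : ∀ i j : ℕ, i ≤ j → d j ≤ d i) :
    |∑ i ∈ range k, c i * a i * ∏ j ∈ range i, (1 - a j)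
      - ∑ i ∈ range k, d i * b i * ∏ j ∈ range i, (1 - b j)|
      ≤ 2 * ∑ i ∈ range k, (∏ j ∈ range i, (1 - a j)) * d i * |a i - b i|
        + ∑ i ∈ range k, (a i * ∏ j ∈ range i, (1 - a j)) * |c i - d i| := by
  set Q : ℕ → ℝ := fun i => ∏ j ∈ range i, (1 - a j) with hQdef
  set Q' : ℕ → ℝ := fun i => ∏ j ∈ range i, (1 - b j) with hQ'def
  have hQ0 : ∀ i, 0 ≤ Q i := fun i =>
    Finset.prod_nonneg fun j _ => by have := (ha j).2; linarith
  have hQ1 : ∀ i, Q i ≤ 1 := fun i =>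
    Finset.prod_le_one (fun j _ => by have := (ha j).2; linarith)
      (fun j _ => by have := (ha j).1; linarith)
  -- decomposition
  have hdec : ∑ i ∈ range k, c i * a i * Q i - ∑ i ∈ range k, d i * b i * Q' i
      = (∑ i ∈ range k, (c i - d i) * (a i * Q i))
        + (∑ i ∈ range k, d i * (a i - b i) * Q i)
        + (∑ i ∈ range k, d i * b i * (Q i - Q' i)) := by
    rw [← Finset.sum_add_distrib, ← Finset.sum_add_distrib, ← Finset.sum_sub_distrib]
    exact Finset.sum_congr rfl fun i _ => by ring
  have h1 : |∑ i ∈ range k, (c i - d i) * (a i * Q i)|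
      ≤ ∑ i ∈ range k, (a i * Q i) * |c i - d i| := by
    refine (Finset.abs_sum_le_sum_abs _ _).trans (le_of_eq ?_)
    refine Finset.sum_congr rfl fun i _ => ?_
    rw [abs_mul, abs_of_nonneg (mul_nonneg (ha i).1 (hQ0 i))]
    ring
  have h2 : |∑ i ∈ range k, d i * (a i - b i) * Q i|
      ≤ ∑ i ∈ range k, Q i * d i * |a i - b i| := by
    refine (Finset.abs_sum_le_sum_abs _ _).trans (le_of_eq ?_)
    refine Finset.sum_congr rfl fun i _ => ?_
    rw [abs_mul, abs_mul, abs_of_nonneg (hd i).1, abs_of_nonneg (hQ0 i)]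
    ring
  -- bound on third term
  have h3 : |∑ i ∈ range k, d i * b i * (Q i - Q' i)|
      ≤ ∑ i ∈ range k, Q i * d i * |a i - b i| := by
    have e1 : ∑ i ∈ range k, d i * b i * (Q i - Q' i)
        = ∑ i ∈ range k, ∑ j ∈ range i,
            d i * b i * (Q j * (b j - a j) * ∏ l ∈ Ico (j+1) i, (1 - b l)) := by
      refine Finset.sum_congr rfl fun i _ => ?_
      rw [show Q i - Q' i = ∑ j ∈ range i, Q j * (b j - a j)
            * ∏ l ∈ Ico (j+1) i, (1 - b l) from rtpm_prod_diff a b i,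
          Finset.mul_sum]
    rw [e1]
    have e2 : ∀ i ∈ range k, ∀ j ∈ range i,
        |d i * b i * (Q j * (b j - a j) * ∏ l ∈ Ico (j+1) i, (1 - b l))|
          = d i * b i * (Q j * |a j - b j| * ∏ l ∈ Ico (j+1) i, (1 - b l)) := by
      intro i _ j _
      have hT : (0:ℝ) ≤ ∏ l ∈ Ico (j+1) i, (1 - b l) :=
        Finset.prod_nonneg fun l _ => by have := (hb l).2; linarith
      rw [abs_mul, abs_mul, abs_of_nonneg (hd i).1, abs_of_nonneg (hb i).1, abs_mul,
        abs_mul, abs_of_nonneg (hQ0 j), abs_of_nonneg hT, abs_sub_comm]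
    calc |∑ i ∈ range k, ∑ j ∈ range i,
            d i * b i * (Q j * (b j - a j) * ∏ l ∈ Ico (j+1) i, (1 - b l))|
        ≤ ∑ i ∈ range k, ∑ j ∈ range i,
            |d i * b i * (Q j * (b j - a j) * ∏ l ∈ Ico (j+1) i, (1 - b l))| := by
          refine (Finset.abs_sum_le_sum_abs _ _).trans ?_
          exact Finset.sum_le_sum fun i _ => Finset.abs_sum_le_sum_abs _ _
      _ = ∑ i ∈ range k, ∑ j ∈ range i,
            d i * b i * (Q j * |a j - b j| * ∏ l ∈ Ico (j+1) i, (1 - b l)) := by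
          refine Finset.sum_congr rfl fun i hi => Finset.sum_congr rfl fun j hj => e2 i hi j hj
      _ = ∑ j ∈ range k, ∑ i ∈ Ico (j+1) k,
            d i * b i * (Q j * |a j - b j| * ∏ l ∈ Ico (j+1) i, (1 - b l)) := by
          simp_rw [Finset.range_eq_Ico]
          rw [← Finset.sum_Ico_Ico_comm' 0 k
            (fun j i => d i * b i * (Q j * |a j - b j| * ∏ l ∈ Ico (j+1) i, (1 - b l)))]
      _ ≤ ∑ j ∈ range k, Q j * d j * |a j - b j| := by
          refine Finset.sum_le_sum fun j _ => ?_
          have step1 : ∑ i ∈ Ico (j+1) k,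
              d i * b i * (Q j * |a j - b j| * ∏ l ∈ Ico (j+1) i, (1 - b l))
              ≤ ∑ i ∈ Ico (j+1) k,
              d j * (Q j * |a j - b j|) * (b i * ∏ l ∈ Ico (j+1) i, (1 - b l)) := by
            refine Finset.sum_le_sum fun i hi => ?_
            have hij : j ≤ i := by
              have := (Finset.mem_Ico.mp hi).1; omega
            have hT : (0:ℝ) ≤ ∏ l ∈ Ico (j+1) i, (1 - b l) :=
              Finset.prod_nonneg fun l _ => by have := (hb l).2; linarith
            have hfac : (0:ℝ) ≤ b i * (Q j * |a j - b j| * ∏ l ∈ Ico (j+1) i, (1 - b l)) :=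
              mul_nonneg (hb i).1 (mul_nonneg (mul_nonneg (hQ0 j) (abs_nonneg _)) hT)
            calc d i * b i * (Q j * |a j - b j| * ∏ l ∈ Ico (j+1) i, (1 - b l))
                = d i * (b i * (Q j * |a j - b j| * ∏ l ∈ Ico (j+1) i, (1 - b l))) := by ring
              _ ≤ d j * (b i * (Q j * |a j - b j| * ∏ l ∈ Ico (j+1) i, (1 - b l))) :=
                  mul_le_mul_of_nonneg_right (hdm j i hij) hfac
              _ = d j * (Q j * |a j - b j|) * (b i * ∏ l ∈ Ico (j+1) i, (1 - b l)) := by ring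
          refine step1.trans ?_
          rw [← Finset.mul_sum, rtpm_geom_sum b (j+1) k]
          have hP : (0:ℝ) ≤ ∏ l ∈ Ico (j+1) k, (1 - b l) :=
            Finset.prod_nonneg fun l _ => by have := (hb l).2; linarith
          have hnn : (0:ℝ) ≤ d j * (Q j * |a j - b j|) :=
            mul_nonneg (hd j).1 (mul_nonneg (hQ0 j) (abs_nonneg _))
          calc d j * (Q j * |a j - b j|) * (1 - ∏ l ∈ Ico (j+1) k, (1 - b l))
              ≤ d j * (Q j * |a j - b j|) * 1 :=
                mul_le_mul_of_nonneg_left (by linarith) hnn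
            _ = Q j * d j * |a j - b j| := by ring
  calc |∑ i ∈ range k, c i * a i * Q i - ∑ i ∈ range k, d i * b i * Q' i|
      = |(∑ i ∈ range k, (c i - d i) * (a i * Q i))
        + (∑ i ∈ range k, d i * (a i - b i) * Q i)
        + (∑ i ∈ range k, d i * b i * (Q i - Q' i))| := by rw [hdec]
    _ ≤ |(∑ i ∈ range k, (c i - d i) * (a i * Q i))
        + (∑ i ∈ range k, d i * (a i - b i) * Q i)|
        + |∑ i ∈ range k, d i * b i * (Q i - Q' i)| := abs_add_le _ _
    _ ≤ |∑ i ∈ range k, (c i - d i) * (a i * Q i)|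
        + |∑ i ∈ range k, d i * (a i - b i) * Q i|
        + |∑ i ∈ range k, d i * b i * (Q i - Q' i)| := by
          have := abs_add_le (∑ i ∈ range k, (c i - d i) * (a i * Q i))
            (∑ i ∈ range k, d i * (a i - b i) * Q i)
          linarith
    _ ≤ 2 * ∑ i ∈ range k, Q i * d i * |a i - b i|
        + ∑ i ∈ range k, (a i * Q i) * |c i - d i| := by linarith

lemma rtpm_prod_bridge {k : ℕ} (i : Fin k) (g : Fin k → ℝ) (G : ℕ → ℝ)
    (hgG : ∀ j : Fin k, g j = G j.val) :
    ∏ j ∈ univ.filter (fun j => j < i), g j = ∏ n ∈ range i.val, G n := by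
  refine Finset.prod_bij' (fun j _ => (j : Fin k).val)
    (fun n hn => ⟨n, lt_trans (mem_range.mp hn) i.isLt⟩) ?_ ?_ ?_ ?_ ?_
  · intro j hj
    simp only [mem_filter, mem_univ, true_and] at hj
    exact mem_range.mpr hj
  · intro n hn
    simp only [mem_filter, mem_univ, true_and]
    exact mem_range.mp hn
  · intro j _; rfl
  · intro n _; rfl
  · intro j _; exact hgG j

theorem rtpm_smoothness
    {k : ℕ} (p p' v v' : Fin k → ℝ)
    (hp : ∀ i, p i ∈ Set.Icc (0:ℝ) 1) (hp' : ∀ i, p' i ∈ Set.Icc (0:ℝ) 1)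
    (hv : ∀ i, v i ∈ Set.Icc (0:ℝ) 1) (hv' : ∀ i, v' i ∈ Set.Icc (0:ℝ) 1)
    (hvmono : ∀ i j : Fin k, i ≤ j → v j ≤ v i)
    (hv'mono : ∀ i j : Fin k, i ≤ j → v' j ≤ v' i) :
    |(∑ i, v i * p i * ∏ j ∈ univ.filter (fun j => j < i), (1 - p j))
      - ∑ i, v' i * p' i * ∏ j ∈ univ.filter (fun j => j < i), (1 - p' j)|
      ≤ 2 * ∑ i, (∏ j ∈ univ.filter (fun j => j < i), (1 - p j)) * v' i * |p i - p' i|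
        + ∑ i, (p i * ∏ j ∈ univ.filter (fun j => j < i), (1 - p j)) * |v i - v' i| := by
  set A : ℕ → ℝ := fun n => if h : n < k then p ⟨n, h⟩ else 0 with hAdef
  set B : ℕ → ℝ := fun n => if h : n < k then p' ⟨n, h⟩ else 0 with hBdef
  set C : ℕ → ℝ := fun n => if h : n < k then v ⟨n, h⟩ else 0 with hCdef
  set D : ℕ → ℝ := fun n => if h : n < k then v' ⟨n, h⟩ else 0 with hDdef
  have hAe : ∀ i : Fin k, p i = A i.val := fun i => by simp [hAdef, i.isLt]
  have hBe : ∀ i : Fin k, p' i = B i.val := fun i => by simp [hBdef, i.isLt]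
  have hCe : ∀ i : Fin k, v i = C i.val := fun i => by simp [hCdef, i.isLt]
  have hDe : ∀ i : Fin k, v' i = D i.val := fun i => by simp [hDdef, i.isLt]
  have hA : ∀ n, A n ∈ Set.Icc (0:ℝ) 1 := fun n => by
    by_cases h : n < k
    · simp only [hAdef, dif_pos h]; exact hp _
    · simp only [hAdef, dif_neg h]; exact ⟨le_refl 0, zero_le_one⟩
  have hB : ∀ n, B n ∈ Set.Icc (0:ℝ) 1 := fun n => by
    by_cases h : n < k
    · simp only [hBdef, dif_pos h]; exact hp' _
    · simp only [hBdef, dif_neg h]; exact ⟨le_refl 0, zero_le_one⟩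
  have hD : ∀ n, D n ∈ Set.Icc (0:ℝ) 1 := fun n => by
    by_cases h : n < k
    · simp only [hDdef, dif_pos h]; exact hv' _
    · simp only [hDdef, dif_neg h]; exact ⟨le_refl 0, zero_le_one⟩
  have hDm : ∀ i j : ℕ, i ≤ j → D j ≤ D i := by
    intro i j hij
    by_cases hj : j < k
    · have hi : i < k := lt_of_le_of_lt hij hj
      simp only [hDdef, dif_pos hi, dif_pos hj]
      exact hv'mono ⟨i, hi⟩ ⟨j, hj⟩ hij
    · simp only [hDdef, dif_neg hj]
      exact (hD i).1
  have s1 : (∑ i, v i * p i * ∏ j ∈ univ.filter (fun j => j < i), (1 - p j))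
      = ∑ n ∈ range k, C n * A n * ∏ j ∈ range n, (1 - A j) := by
    rw [← Fin.sum_univ_eq_sum_range (fun n => C n * A n * ∏ j ∈ range n, (1 - A j)) k]
    refine Finset.sum_congr rfl fun i _ => ?_
    rw [hCe i, hAe i, rtpm_prod_bridge i (fun j => 1 - p j) (fun n => 1 - A n)
      (fun j => by show 1 - p j = 1 - A j.val; rw [hAe j])]
  have s2 : (∑ i, v' i * p' i * ∏ j ∈ univ.filter (fun j => j < i), (1 - p' j))
      = ∑ n ∈ range k, D n * B n * ∏ j ∈ range n, (1 - B j) := by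
    rw [← Fin.sum_univ_eq_sum_range (fun n => D n * B n * ∏ j ∈ range n, (1 - B j)) k]
    refine Finset.sum_congr rfl fun i _ => ?_
    rw [hDe i, hBe i, rtpm_prod_bridge i (fun j => 1 - p' j) (fun n => 1 - B n)
      (fun j => by show 1 - p' j = 1 - B j.val; rw [hBe j])]
  have s3 : (∑ i, (∏ j ∈ univ.filter (fun j => j < i), (1 - p j)) * v' i * |p i - p' i|)
      = ∑ n ∈ range k, (∏ j ∈ range n, (1 - A j)) * D n * |A n - B n| := by
    rw [← Fin.sum_univ_eq_sum_range
      (fun n => (∏ j ∈ range n, (1 - A j)) * D n * |A n - B n|) k]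
    refine Finset.sum_congr rfl fun i _ => ?_
    rw [hDe i, hAe i, hBe i, rtpm_prod_bridge i (fun j => 1 - p j) (fun n => 1 - A n)
      (fun j => by show 1 - p j = 1 - A j.val; rw [hAe j])]
  have s4 : (∑ i, (p i * ∏ j ∈ univ.filter (fun j => j < i), (1 - p j)) * |v i - v' i|)
      = ∑ n ∈ range k, (A n * ∏ j ∈ range n, (1 - A j)) * |C n - D n| := by
    rw [← Fin.sum_univ_eq_sum_range
      (fun n => (A n * ∏ j ∈ range n, (1 - A j)) * |C n - D n|) k]
    refine Finset.sum_congr rfl fun i _ => ?_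
    rw [hCe i, hDe i, hAe i, rtpm_prod_bridge i (fun j => 1 - p j) (fun n => 1 - A n)
      (fun j => by show 1 - p j = 1 - A j.val; rw [hAe j])]
  rw [s1, s2, s3, s4]
  exact rtpm_main k A B C D hA hB hD hDm
end

section
/- Let p, p', v, v' ∈ [0,1]^k with v_1 ≥ ... ≥ v_k, v'_1 ≥ ... ≥ v'_k, and p_i ≥ p'_i for all i. Then r(p,v) - r(p',v') ≤ Σ_{i=1}^k q_i(p) v'_i (p_i - p'_i) + Σ_{i=1}^k q̃_i(p) |v_i - v'_i|, where r(p,v) = Σ_{i=1}^k v_i p_i ∏_{j<i}(1-p_j), q_i(p) = ∏_{j<i}(1-p_j), and q̃_i(p) = p_i q_i(p). -/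
open Finset

private lemma Qmem (p : ℕ → ℝ) (hp : ∀ i, p i ∈ Set.Icc (0:ℝ) 1) (i : ℕ) :
    (∏ j ∈ range i, (1 - p j)) ∈ Set.Icc (0:ℝ) 1 := by
  induction i with
  | zero => simp
  | succ n ih =>
    rw [prod_range_succ]
    obtain ⟨h0, h1⟩ := ih
    obtain ⟨a0, a1⟩ := hp n
    constructor
    · exact mul_nonneg h0 (by linarith)
    · nlinarith

private lemma r_nonneg (k : ℕ) (p v : ℕ → ℝ) (hp : ∀ i, p i ∈ Set.Icc (0:ℝ) 1)
    (hv : ∀ i, v i ∈ Set.Icc (0:ℝ) 1) :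
    0 ≤ ∑ i ∈ range k, v i * p i * ∏ j ∈ range i, (1 - p j) := by
  apply sum_nonneg
  intro i _
  exact mul_nonneg (mul_nonneg (hv i).1 (hp i).1) (Qmem p hp i).1

private lemma key_lemma : ∀ (k : ℕ) (p p' v : ℕ → ℝ),
    (∀ i, p i ∈ Set.Icc (0:ℝ) 1) → (∀ i, p' i ∈ Set.Icc (0:ℝ) 1) →
    (∀ i, v i ∈ Set.Icc (0:ℝ) 1) → (∀ i, p' i ≤ p i) →
    (∑ i ∈ range k, v i * p i * ∏ j ∈ range i, (1 - p j))
      - (∑ i ∈ range k, v i * p' i * ∏ j ∈ range i, (1 - p' j))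
      ≤ ∑ i ∈ range k, (∏ j ∈ range i, (1 - p j)) * v i * (p i - p' i) := by
  intro k
  induction k with
  | zero => intro p p' v _ _ _ _; simp
  | succ n ih =>
    intro p p' v hp hp' hv hpp'
    have split : ∀ (q w : ℕ → ℝ), ∑ i ∈ range (n+1), w i * q i * ∏ j ∈ range i, (1 - q j)
        = w 0 * q 0 + (1 - q 0) * ∑ i ∈ range n, w (i+1) * q (i+1) * ∏ j ∈ range i, (1 - q (j+1)) := by
      intro q w
      rw [Finset.sum_range_succ']
      rw [Finset.mul_sum]
      simp only [prod_range_zero, mul_one]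
      rw [add_comm]
      congr 1
      apply Finset.sum_congr rfl
      intro i _
      rw [Finset.prod_range_succ']
      ring
    have split2 : ∑ i ∈ range (n+1), (∏ j ∈ range i, (1 - p j)) * v i * (p i - p' i)
        = v 0 * (p 0 - p' 0) + (1 - p 0) * ∑ i ∈ range n,
            (∏ j ∈ range i, (1 - p (j+1))) * v (i+1) * (p (i+1) - p' (i+1)) := by
      rw [Finset.sum_range_succ', Finset.mul_sum]
      simp only [prod_range_zero, one_mul]
      rw [add_comm]
      congr 1
      apply Finset.sum_congr rfl
      intro i _
      rw [Finset.prod_range_succ']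
      ring
    rw [split p v, split p' v, split2]
    have IH := ih (fun i => p (i+1)) (fun i => p' (i+1)) (fun i => v (i+1))
      (fun i => hp _) (fun i => hp' _) (fun i => hv _) (fun i => hpp' _)
    have hr0 : 0 ≤ ∑ i ∈ range n, v (i+1) * p' (i+1) * ∏ j ∈ range i, (1 - p' (j+1)) :=
      r_nonneg n (fun i => p' (i+1)) (fun i => v (i+1)) (fun i => hp' _) (fun i => hv _)
    have h1 : (1 : ℝ) - p 0 ≥ 0 := by have := (hp 0).2; linarith
    have h2 : p' 0 ≤ p 0 := hpp' 0
    nlinarith [mul_le_mul_of_nonneg_left IH h1]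

private lemma filt_prod {k : ℕ} (i : Fin k) (g : ℕ → ℝ) :
    ∏ j ∈ univ.filter (fun j => j < i), g j.val = ∏ j ∈ range i.val, g j := by
  refine (Finset.prod_bij
    (fun (m : ℕ) (hm : m ∈ range i.val) =>
      (⟨m, lt_trans (mem_range.mp hm) i.isLt⟩ : Fin k)) ?_ ?_ ?_ ?_).symm
  · intro m hm
    simp only [mem_filter, mem_univ, true_and, Fin.lt_def]
    exact mem_range.mp hm
  · intro m1 h1 m2 h2 h
    simpa using congrArg Fin.val h
  · intro a ha
    simp only [mem_filter, mem_univ, true_and, Fin.lt_def] at ha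
    exact ⟨a.val, mem_range.mpr ha, Fin.ext rfl⟩
  · intro m hm; rfl

theorem rtpm_smoothness_monotone
    {k : ℕ} (p p' v v' : Fin k → ℝ)
    (hp : ∀ i, p i ∈ Set.Icc (0:ℝ) 1) (hp' : ∀ i, p' i ∈ Set.Icc (0:ℝ) 1)
    (hv : ∀ i, v i ∈ Set.Icc (0:ℝ) 1) (hv' : ∀ i, v' i ∈ Set.Icc (0:ℝ) 1)
    (hvmono : ∀ i j : Fin k, i ≤ j → v j ≤ v i)
    (hv'mono : ∀ i j : Fin k, i ≤ j → v' j ≤ v' i)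
    (hpp' : ∀ i, p' i ≤ p i) :
    (∑ i, v i * p i * ∏ j ∈ univ.filter (fun j => j < i), (1 - p j))
      - (∑ i, v' i * p' i * ∏ j ∈ univ.filter (fun j => j < i), (1 - p' j))
      ≤ (∑ i, (∏ j ∈ univ.filter (fun j => j < i), (1 - p j)) * v' i * (p i - p' i))
        + ∑ i, (p i * ∏ j ∈ univ.filter (fun j => j < i), (1 - p j)) * |v i - v' i| := by
  classical
  set P : ℕ → ℝ := fun n => if h : n < k then p ⟨n, h⟩ else 0 with hP
  set P' : ℕ → ℝ := fun n => if h : n < k then p' ⟨n, h⟩ else 0 with hP'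
  set V : ℕ → ℝ := fun n => if h : n < k then v ⟨n, h⟩ else 0 with hV
  set V' : ℕ → ℝ := fun n => if h : n < k then v' ⟨n, h⟩ else 0 with hV'
  have hPm : ∀ n, P n ∈ Set.Icc (0:ℝ) 1 := by
    intro n; by_cases h : n < k <;> simp [hP, h] <;> exact hp _
  have hP'm : ∀ n, P' n ∈ Set.Icc (0:ℝ) 1 := by
    intro n; by_cases h : n < k <;> simp [hP', h] <;> exact hp' _
  have hVm : ∀ n, V n ∈ Set.Icc (0:ℝ) 1 := by
    intro n; by_cases h : n < k <;> simp [hV, h] <;> exact hv _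
  have hV'm : ∀ n, V' n ∈ Set.Icc (0:ℝ) 1 := by
    intro n; by_cases h : n < k <;> simp [hV', h] <;> exact hv' _
  have hPP' : ∀ n, P' n ≤ P n := by
    intro n; by_cases h : n < k <;> simp [hP, hP', h] <;> exact hpp' _
  -- product conversions
  have prodP : ∀ i : Fin k, ∏ j ∈ univ.filter (fun j => j < i), (1 - p j)
      = ∏ j ∈ range i.val, (1 - P j) := by
    intro i
    rw [← filt_prod i (fun n => 1 - P n)]
    apply prod_congr rfl
    intro j _
    simp [hP, j.isLt]
  have prodP' : ∀ i : Fin k, ∏ j ∈ univ.filter (fun j => j < i), (1 - p' j)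
      = ∏ j ∈ range i.val, (1 - P' j) := by
    intro i
    rw [← filt_prod i (fun n => 1 - P' n)]
    apply prod_congr rfl
    intro j _
    simp [hP', j.isLt]
  have s1 : ∑ i, v i * p i * ∏ j ∈ univ.filter (fun j => j < i), (1 - p j)
      = ∑ i ∈ range k, V i * P i * ∏ j ∈ range i, (1 - P j) := by
    rw [← Fin.sum_univ_eq_sum_range]
    apply sum_congr rfl
    intro i _
    rw [← prodP i]
    simp [hV, hP, i.isLt]
  have s2 : ∑ i, v' i * p' i * ∏ j ∈ univ.filter (fun j => j < i), (1 - p' j)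
      = ∑ i ∈ range k, V' i * P' i * ∏ j ∈ range i, (1 - P' j) := by
    rw [← Fin.sum_univ_eq_sum_range]
    apply sum_congr rfl
    intro i _
    rw [← prodP' i]
    simp [hV', hP', i.isLt]
  have s3 : ∑ i, (∏ j ∈ univ.filter (fun j => j < i), (1 - p j)) * v' i * (p i - p' i)
      = ∑ i ∈ range k, (∏ j ∈ range i, (1 - P j)) * V' i * (P i - P' i) := by
    rw [← Fin.sum_univ_eq_sum_range]
    apply sum_congr rfl
    intro i _
    rw [← prodP i]
    simp [hV', hP, hP', i.isLt]
  have s4 : ∑ i, (p i * ∏ j ∈ univ.filter (fun j => j < i), (1 - p j)) * |v i - v' i|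
      = ∑ i ∈ range k, (P i * ∏ j ∈ range i, (1 - P j)) * |V i - V' i| := by
    rw [← Fin.sum_univ_eq_sum_range]
    apply sum_congr rfl
    intro i _
    rw [← prodP i]
    simp [hV, hV', hP, i.isLt]
  rw [s1, s2, s3, s4]
  -- split: r(P,V) - r(P',V') = (r(P,V) - r(P,V')) + (r(P,V') - r(P',V'))
  have keyA : (∑ i ∈ range k, V' i * P i * ∏ j ∈ range i, (1 - P j))
      - (∑ i ∈ range k, V' i * P' i * ∏ j ∈ range i, (1 - P' j))
      ≤ ∑ i ∈ range k, (∏ j ∈ range i, (1 - P j)) * V' i * (P i - P' i) :=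
    key_lemma k P P' V' hPm hP'm hV'm hPP'
  have keyB : (∑ i ∈ range k, V i * P i * ∏ j ∈ range i, (1 - P j))
      - (∑ i ∈ range k, V' i * P i * ∏ j ∈ range i, (1 - P j))
      ≤ ∑ i ∈ range k, (P i * ∏ j ∈ range i, (1 - P j)) * |V i - V' i| := by
    rw [← Finset.sum_sub_distrib]
    apply sum_le_sum
    intro i _
    have hq : 0 ≤ P i * ∏ j ∈ range i, (1 - P j) :=
      mul_nonneg (hPm i).1 (Qmem P hPm i).1
    have : V i * P i * ∏ j ∈ range i, (1 - P j) - V' i * P i * ∏ j ∈ range i, (1 - P j)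
        = (P i * ∏ j ∈ range i, (1 - P j)) * (V i - V' i) := by ring
    rw [this]
    exact mul_le_mul_of_nonneg_left (le_abs_self _) hq
  linarith
end

section
/- (Arm equivalence) Let p, v ∈ [0,1]^k with v_1 ≥ ... ≥ v_k, and define p'_i = p_i v_i and v'_i = 1 for all i. Then r(p, v) ≤ r(p', v'), i.e. Σ_{i=1}^k v_i p_i ∏_{j<i}(1 - p_j) ≤ Σ_{i=1}^k p_i v_i ∏_{j<i}(1 - p_j v_j). -/
open Finset

theorem arm_equivalence
    {k : ℕ} (p v : Fin k → ℝ)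
    (hp : ∀ i, p i ∈ Set.Icc (0:ℝ) 1) (hv : ∀ i, v i ∈ Set.Icc (0:ℝ) 1)
    (hvmono : ∀ i j : Fin k, i ≤ j → v j ≤ v i) :
    ∑ i, v i * p i * ∏ j ∈ univ.filter (fun j => j < i), (1 - p j)
      ≤ ∑ i, p i * v i * ∏ j ∈ univ.filter (fun j => j < i), (1 - p j * v j) := by
  apply Finset.sum_le_sum
  intro i _
  rw [mul_comm (v i) (p i)]
  apply mul_le_mul_of_nonneg_left _ (mul_nonneg (hp i).1 (hv i).1)
  apply Finset.prod_le_prod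
  · intro j _; linarith [(hp j).2]
  · intro j _
    nlinarith [(hp j).1, (hp j).2, (hv j).1, (hv j).2]
end

section
/- Let p, v ∈ [0,1]^k with v_1 ≥ ... ≥ v_k. For any index m, replacing (p_m, v_m) by (p_m v_m, 1) does not decrease the expected max-reward: Σ_{i=1}^k v_i p_i ∏_{j<i}(1-p_j) ≤ Σ_{i<m} v_i p_i ∏_{j<i}(1-p_j) + p_m v_m ∏_{j<m}(1-p_j) + Σ_{i>m} v_i p_i (1 - p_m v_m) ∏_{j<i, j≠m}(1-p_j). -/
open Finset

theorem arm_equivalence_single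
    {k : ℕ} (p v : Fin k → ℝ)
    (hp : ∀ i, p i ∈ Set.Icc (0:ℝ) 1) (hv : ∀ i, v i ∈ Set.Icc (0:ℝ) 1)
    (hvmono : ∀ i j : Fin k, i ≤ j → v j ≤ v i) (m : Fin k) :
    ∑ i, v i * p i * ∏ j ∈ univ.filter (fun j => j < i), (1 - p j)
      ≤ (∑ i ∈ univ.filter (fun i => i < m),
            v i * p i * ∏ j ∈ univ.filter (fun j => j < i), (1 - p j))
        + p m * v m * ∏ j ∈ univ.filter (fun j => j < m), (1 - p j)
        + ∑ i ∈ univ.filter (fun i => m < i),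
            v i * p i * (1 - p m * v m)
              * ∏ j ∈ univ.filter (fun j => j < i ∧ j ≠ m), (1 - p j) := by
  set f : Fin k → ℝ := fun i => v i * p i * ∏ j ∈ univ.filter (fun j => j < i), (1 - p j)
    with hf
  have hsplit : ∑ i, f i
      = (∑ i ∈ univ.filter (fun i => i < m), f i) + (f m
        + ∑ i ∈ univ.filter (fun i => m < i), f i) := by
    rw [← Finset.sum_filter_add_sum_filter_not univ (fun i => i < m) f]
    congr 1
    have : univ.filter (fun i : Fin k => ¬ i < m)
        = insert m (univ.filter (fun i => m < i)) := by
      ext x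
      simp only [mem_filter, mem_univ, true_and, mem_insert, Fin.lt_def, Fin.ext_iff]
      omega
    rw [this, Finset.sum_insert (by simp)]
  rw [hsplit]
  have hmm : f m = p m * v m * ∏ j ∈ univ.filter (fun j => j < m), (1 - p j) := by
    show v m * p m * _ = _; ring
  rw [hmm, add_assoc]
  apply add_le_add_right
  apply add_le_add_right
  apply Finset.sum_le_sum
  intro i hi
  have him : m < i := by simpa using hi
  have hprod : univ.filter (fun j : Fin k => j < i)
      = insert m (univ.filter (fun j => j < i ∧ j ≠ m)) := by
    ext x
    simp only [mem_filter, mem_univ, true_and, mem_insert, Fin.lt_def, Fin.ext_iff, ne_eq]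
    constructor
    · intro hx
      rcases eq_or_ne (x : ℕ) (m : ℕ) with h | h
      · left; omega
      · right; exact ⟨hx, fun hc => h (by omega)⟩
    · rintro (h | ⟨h1, h2⟩)
      · omega
      · exact h1
  have hPnn : (0:ℝ) ≤ ∏ j ∈ univ.filter (fun j : Fin k => j < i ∧ j ≠ m), (1 - p j) := by
    apply Finset.prod_nonneg
    intro j hj
    have := (hp j).2
    linarith
  have hvi := hv i
  have hpi := hp i
  have hpm := hp m
  have hvm := hv m
  simp only [hf]
  rw [hprod, Finset.prod_insert (by simp)]
  have key : (1 - p m) ≤ (1 - p m * v m) := by nlinarith [hpm.1, hvm.2]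
  have h1 : v i * p i * ((1 - p m) * ∏ j ∈ univ.filter (fun j : Fin k => j < i ∧ j ≠ m), (1 - p j))
      ≤ v i * p i * ((1 - p m * v m) * ∏ j ∈ univ.filter (fun j : Fin k => j < i ∧ j ≠ m), (1 - p j)) := by
    have hvp : 0 ≤ v i * p i := mul_nonneg hvi.1 hpi.1
    apply mul_le_mul_of_nonneg_left _ hvp
    exact mul_le_mul_of_nonneg_right key hPnn
  calc v i * p i * ((1 - p m) * ∏ j ∈ univ.filter (fun j : Fin k => j < i ∧ j ≠ m), (1 - p j))
      ≤ v i * p i * ((1 - p m * v m) * ∏ j ∈ univ.filter (fun j : Fin k => j < i ∧ j ≠ m), (1 - p j)) := h1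
    _ = v i * p i * (1 - p m * v m) * ∏ j ∈ univ.filter (fun j : Fin k => j < i ∧ j ≠ m), (1 - p j) := by ring
end

section
/- Let p, v ∈ [0,1]^k with v_1 ≥ ... ≥ v_k, and let p' be defined by p'_i = p_i v_i, v'_i = 1. Then r(p', v') - r(p, v) ≤ 2 Σ_{i=1}^k q_i(p) (p_i - p'_i) + Σ_{i=1}^k q̃_i(p) (1 - v_i), where q_i(p) = ∏_{j<i}(1-p_j), q̃_i(p) = p_i q_i(p), and r(p,v) = Σ_{i=1}^k v_i p_i ∏_{j<i}(1-p_j). -/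
open Finset

lemma sum_telescope_prod_aux {k : ℕ} (x : Fin k → ℝ) :
    ∑ i, x i * ∏ j ∈ univ.filter (fun j => j < i), (1 - x j)
      = 1 - ∏ i, (1 - x i) := by
  have key : ∀ i : Fin k,
      x i * ∏ j ∈ univ.filter (fun j => j < i), (1 - x j)
      = (∏ j ∈ univ.filter (fun j : Fin k => (j : ℕ) < (i : ℕ)), (1 - x j))
        - ∏ j ∈ univ.filter (fun j : Fin k => (j : ℕ) < (i : ℕ) + 1), (1 - x j) := by
    intro i
    have h1 : univ.filter (fun j : Fin k => (j : ℕ) < (i : ℕ))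
        = univ.filter (fun j : Fin k => j < i) := by
      apply Finset.filter_congr; intro j _; exact Iff.symm Fin.lt_def
    have h2 : univ.filter (fun j : Fin k => (j : ℕ) < (i : ℕ) + 1)
        = insert i (univ.filter (fun j : Fin k => j < i)) := by
      ext j
      simp only [Finset.mem_filter, Finset.mem_insert, Finset.mem_univ, true_and,
        Nat.lt_succ_iff, Fin.lt_def]
      constructor
      · intro h
        rcases lt_or_eq_of_le h with h | h
        · exact Or.inr h
        · exact Or.inl (Fin.ext h)
      · rintro (rfl | h)
        · exact le_refl _
        · exact le_of_lt h
    rw [h1, h2, Finset.prod_insert (by simp)]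
    ring
  calc ∑ i, x i * ∏ j ∈ univ.filter (fun j => j < i), (1 - x j)
      = ∑ i : Fin k, ((∏ j ∈ univ.filter (fun j : Fin k => (j : ℕ) < (i : ℕ)), (1 - x j))
          - ∏ j ∈ univ.filter (fun j : Fin k => (j : ℕ) < (i : ℕ) + 1), (1 - x j)) := by
        exact Finset.sum_congr rfl (fun i _ => key i)
    _ = ∑ n ∈ Finset.range k, ((∏ j ∈ univ.filter (fun j : Fin k => (j : ℕ) < n), (1 - x j))
          - ∏ j ∈ univ.filter (fun j : Fin k => (j : ℕ) < n + 1), (1 - x j)) := by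
        rw [Finset.sum_range fun n => _]
    _ = (∏ j ∈ univ.filter (fun j : Fin k => (j : ℕ) < 0), (1 - x j))
          - ∏ j ∈ univ.filter (fun j : Fin k => (j : ℕ) < k), (1 - x j) := by
        exact Finset.sum_range_sub' _ k
    _ = 1 - ∏ i, (1 - x i) := by
        congr 1
        · simp
        · apply Finset.prod_congr _ (fun _ _ => rfl)
          ext j; simp [j.isLt]

theorem replacement_error_bound
    {k : ℕ} (p v : Fin k → ℝ)
    (hp : ∀ i, p i ∈ Set.Icc (0:ℝ) 1) (hv : ∀ i, v i ∈ Set.Icc (0:ℝ) 1)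
    (hvmono : ∀ i j : Fin k, i ≤ j → v j ≤ v i) :
    (∑ i, (1:ℝ) * (p i * v i) * ∏ j ∈ univ.filter (fun j => j < i), (1 - p j * v j))
      - (∑ i, v i * p i * ∏ j ∈ univ.filter (fun j => j < i), (1 - p j))
      ≤ 2 * ∑ i, (∏ j ∈ univ.filter (fun j => j < i), (1 - p j)) * (p i - p i * v i)
        + ∑ i, (p i * ∏ j ∈ univ.filter (fun j => j < i), (1 - p j)) * (1 - v i) := by
  have hp0 : ∀ i, 0 ≤ p i := fun i => (hp i).1
  have hp1 : ∀ i, p i ≤ 1 := fun i => (hp i).2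
  have hv0 : ∀ i, 0 ≤ v i := fun i => (hv i).1
  have hv1 : ∀ i, v i ≤ 1 := fun i => (hv i).2
  have h1 : (∑ i, (1:ℝ) * (p i * v i) * ∏ j ∈ univ.filter (fun j => j < i), (1 - p j * v j))
      = 1 - ∏ i, (1 - p i * v i) := by
    simpa using sum_telescope_prod_aux (fun i => p i * v i)
  have h2 : (∑ i, p i * ∏ j ∈ univ.filter (fun j => j < i), (1 - p j))
      = 1 - ∏ i, (1 - p i) := sum_telescope_prod_aux p
  have hprod : (∏ i, (1 - p i)) ≤ ∏ i, (1 - p i * v i) := by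
    apply Finset.prod_le_prod
    · intro i _; linarith [hp1 i]
    · intro i _
      have : p i * v i ≤ p i := by
        nlinarith [hp0 i, hv1 i]
      linarith
  have hfirst : 0 ≤ 2 * ∑ i, (∏ j ∈ univ.filter (fun j => j < i), (1 - p j)) * (p i - p i * v i) := by
    apply mul_nonneg (by norm_num)
    apply Finset.sum_nonneg
    intro i _
    apply mul_nonneg
    · apply Finset.prod_nonneg; intro j _; linarith [hp1 j]
    · nlinarith [hp0 i, hv1 i]
  have hsec : (∑ i, p i * ∏ j ∈ univ.filter (fun j => j < i), (1 - p j))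
      - (∑ i, v i * p i * ∏ j ∈ univ.filter (fun j => j < i), (1 - p j))
      = ∑ i, (p i * ∏ j ∈ univ.filter (fun j => j < i), (1 - p j)) * (1 - v i) := by
    rw [← Finset.sum_sub_distrib]
    apply Finset.sum_congr rfl
    intro i _; ring
  have hkey : (∑ i, (1:ℝ) * (p i * v i) * ∏ j ∈ univ.filter (fun j => j < i), (1 - p j * v j))
      ≤ ∑ i, p i * ∏ j ∈ univ.filter (fun j => j < i), (1 - p j) := by
    rw [h1, h2]; linarith
  linarith
end

section
/- Let p, v ∈ [0,1]^k with v_1 ≥ ... ≥ v_k, and let p', v' coincide with p, v except at one coordinate m where p'_m, v'_m ∈ [0,1] (with sort order preserved in both vectors). Then |r(p,v) - r(p',v')| ≤ 2 q_m(p) v'_m |p_m - p'_m| + q̃_m(p) |v_m - v'_m| where q_m(p) = ∏_{j<m}(1-p_j), q̃_m(p) = p_m q_m(p), and r(p,v) = Σ_{i=1}^k v_i p_i ∏_{j<i}(1-p_j). -/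
open Finset

lemma telescope {k : ℕ} (p : Fin k → ℝ) (s : Finset (Fin k)) :
    ∑ i ∈ s, p i * ∏ j ∈ s.filter (fun j => j < i), (1 - p j)
      = 1 - ∏ j ∈ s, (1 - p j) := by
  induction s using Finset.induction_on_max with
  | empty => simp
  | insert a s ha ih =>
    rw [Finset.sum_insert (fun h => lt_irrefl a (ha a h))]
    have h1 : (insert a s).filter (fun j => j < a) = s := by
      ext x
      simp only [Finset.mem_filter, Finset.mem_insert]
      constructor
      · rintro ⟨h | h, hx⟩
        · exact absurd hx (by simp [h])
        · exact h
      · intro hx; exact ⟨Or.inr hx, ha x hx⟩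
    have h2 : ∀ i ∈ s, (insert a s).filter (fun j => j < i) = s.filter (fun j => j < i) := by
      intro i hi
      ext x
      simp only [Finset.mem_filter, Finset.mem_insert]
      constructor
      · rintro ⟨h | h, hx⟩
        · exact absurd hx (by simp [h]; exact le_of_lt (ha i hi))
        · exact ⟨h, hx⟩
      · rintro ⟨h, hx⟩; exact ⟨Or.inr h, hx⟩
    rw [h1, Finset.sum_congr rfl (fun i hi => by rw [h2 i hi]), ih,
      Finset.prod_insert (fun h => lt_irrefl a (ha a h))]
    ring

theorem single_coordinate_smoothness
    {k : ℕ} (p p' v v' : Fin k → ℝ) (m : Fin k)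
    (hp : ∀ i, p i ∈ Set.Icc (0:ℝ) 1) (hv : ∀ i, v i ∈ Set.Icc (0:ℝ) 1)
    (hp'm : p' m ∈ Set.Icc (0:ℝ) 1) (hv'm : v' m ∈ Set.Icc (0:ℝ) 1)
    (hpp' : ∀ i, i ≠ m → p' i = p i) (hvv' : ∀ i, i ≠ m → v' i = v i)
    (hvmono : ∀ i j : Fin k, i ≤ j → v j ≤ v i)
    (hv'mono : ∀ i j : Fin k, i ≤ j → v' j ≤ v' i) :
    |(∑ i, v i * p i * ∏ j ∈ univ.filter (fun j => j < i), (1 - p j))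
      - ∑ i, v' i * p' i * ∏ j ∈ univ.filter (fun j => j < i), (1 - p' j)|
      ≤ 2 * (∏ j ∈ univ.filter (fun j => j < m), (1 - p j)) * v' m * |p m - p' m|
        + (p m * ∏ j ∈ univ.filter (fun j => j < m), (1 - p j)) * |v m - v' m| := by
  have h1p : ∀ j, 0 ≤ 1 - p j := fun j => by linarith [(hp j).2]
  set Qm : ℝ := ∏ j ∈ univ.filter (fun j => j < m), (1 - p j) with hQmdef
  have hQmnn : 0 ≤ Qm := Finset.prod_nonneg (fun j _ => h1p j)
  set A : ℝ := ∑ i, v i * p i * ∏ j ∈ univ.filter (fun j => j < i), (1 - p j) with hA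
  set B : ℝ := ∑ i, v' i * p i * ∏ j ∈ univ.filter (fun j => j < i), (1 - p j) with hB
  set C : ℝ := ∑ i, v' i * p' i * ∏ j ∈ univ.filter (fun j => j < i), (1 - p' j) with hC
  -- Step 1
  have step1 : A - B = (v m - v' m) * (p m * Qm) := by
    rw [hA, hB, ← Finset.sum_sub_distrib]
    rw [Finset.sum_eq_single m]
    · ring
    · intro i _ hi; rw [hvv' i hi]; ring
    · simp
  -- products over j < i agree when i ≤ m
  have hQeq : ∀ i : Fin k, i ≤ m →
      (∏ j ∈ univ.filter (fun j => j < i), (1 - p' j))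
        = ∏ j ∈ univ.filter (fun j => j < i), (1 - p j) := by
    intro i hi
    apply Finset.prod_congr rfl
    intro j hj
    rw [hpp' j (ne_of_lt (lt_of_lt_of_le (Finset.mem_filter.mp hj).2 hi))]
  set R : Fin k → ℝ := fun i => ∏ j ∈ univ.filter (fun j => m < j ∧ j < i), (1 - p j) with hR
  have hRnn : ∀ i, 0 ≤ R i := fun i => Finset.prod_nonneg (fun j _ => h1p j)
  -- term decomposition for i > m
  have hterm : ∀ i : Fin k, m < i →
      v' i * p i * (∏ j ∈ univ.filter (fun j => j < i), (1 - p j))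
        - v' i * p' i * (∏ j ∈ univ.filter (fun j => j < i), (1 - p' j))
      = v' i * p i * ((p' m - p m) * (Qm * R i)) := by
    intro i hi
    have hmem : m ∈ univ.filter (fun j => j < i) := by simp [hi]
    have hpi : p' i = p i := hpp' i (ne_of_gt hi)
    have hE : ((univ.filter (fun j => j < i)).erase m)
        = univ.filter (fun j => j < m) ∪ univ.filter (fun j => m < j ∧ j < i) := by
      ext x
      simp only [Finset.mem_erase, Finset.mem_union, Finset.mem_filter, Finset.mem_univ,
        true_and, ne_eq, Fin.lt_def, Fin.ext_iff]
      omega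
    have hdisj : Disjoint (univ.filter (fun j => j < m))
        (univ.filter (fun j => m < j ∧ j < i)) := by
      rw [Finset.disjoint_left]
      intro x hx hx'
      simp only [Finset.mem_filter, Finset.mem_univ, true_and] at hx hx'
      exact absurd (lt_trans hx hx'.1) (lt_irrefl x)
    have hEeq : ∀ P : Fin k → ℝ, (∏ j ∈ univ.filter (fun j => j < i), (1 - P j))
        = (1 - P m) * ∏ j ∈ (univ.filter (fun j => j < i)).erase m, (1 - P j) :=
      fun P => (Finset.mul_prod_erase _ _ hmem).symm
    have hE' : (∏ j ∈ (univ.filter (fun j => j < i)).erase m, (1 - p' j))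
        = ∏ j ∈ (univ.filter (fun j => j < i)).erase m, (1 - p j) := by
      apply Finset.prod_congr rfl
      intro j hj
      rw [hpp' j (Finset.mem_erase.mp hj).1]
    rw [hEeq p, hEeq p', hE', hpi, hE, Finset.prod_union hdisj, ← hQmdef]
    simp only [hR]
    ring
  -- Step 2
  have step2 : B - C = v' m * Qm * (p m - p' m)
      + (p' m - p m) * ∑ i ∈ univ.filter (fun i => m < i), v' i * p i * (Qm * R i) := by
    rw [hB, hC, ← Finset.sum_sub_distrib]
    have hzero : ∀ i ∈ (univ : Finset (Fin k)), i ∉ univ.filter (fun i => m ≤ i) →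
        (v' i * p i * ∏ j ∈ univ.filter (fun j => j < i), (1 - p j)
          - v' i * p' i * ∏ j ∈ univ.filter (fun j => j < i), (1 - p' j)) = 0 := by
      intro i _ hi
      simp only [Finset.mem_filter, Finset.mem_univ, true_and, not_le] at hi
      rw [hQeq i (le_of_lt hi), hpp' i (ne_of_lt hi)]
      ring
    rw [← Finset.sum_subset (Finset.subset_univ _) hzero]
    have hins : (univ.filter (fun i => m ≤ i)) = insert m (univ.filter (fun i => m < i)) := by
      ext x
      simp only [Finset.mem_filter, Finset.mem_univ, true_and, Finset.mem_insert,
        Fin.lt_def, Fin.le_def, Fin.ext_iff]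
      omega
    have hnotmem : m ∉ univ.filter (fun i => m < i) := by simp
    rw [hins, Finset.sum_insert hnotmem]
    rw [hQeq m le_rfl, ← hQmdef, Finset.mul_sum]
    rw [Finset.sum_congr rfl (fun i hi => hterm i (Finset.mem_filter.mp hi).2)]
    have : ∀ i ∈ univ.filter (fun i => m < i),
        v' i * p i * ((p' m - p m) * (Qm * R i)) = (p' m - p m) * (v' i * p i * (Qm * R i)) := by
      intro i _; ring
    rw [Finset.sum_congr rfl this]
    ring
  -- bound the sum
  have hsumbound : ∑ i ∈ univ.filter (fun i => m < i), v' i * p i * (Qm * R i)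
      ≤ v' m * Qm := by
    have h1 : ∀ i ∈ univ.filter (fun i => m < i),
        v' i * p i * (Qm * R i) ≤ v' m * Qm * (p i * R i) := by
      intro i hi
      simp only [Finset.mem_filter, Finset.mem_univ, true_and] at hi
      have hv'i : v' i ≤ v' m := hv'mono m i (le_of_lt hi)
      have hv'inn : 0 ≤ v' i := by rw [hvv' i (ne_of_gt hi)]; exact (hv i).1
      have := (hp i).1
      nlinarith [hRnn i, (hp i).1, mul_nonneg (mul_nonneg (hp i).1 (hRnn i)) hQmnn]
    calc ∑ i ∈ univ.filter (fun i => m < i), v' i * p i * (Qm * R i)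
        ≤ ∑ i ∈ univ.filter (fun i => m < i), v' m * Qm * (p i * R i) :=
          Finset.sum_le_sum h1
      _ = v' m * Qm * ∑ i ∈ univ.filter (fun i => m < i), p i * R i := by
          rw [Finset.mul_sum]
      _ ≤ v' m * Qm * 1 := by
          apply mul_le_mul_of_nonneg_left _ (mul_nonneg hv'm.1 hQmnn)
          have hfe : ∀ i ∈ univ.filter (fun i => m < i),
              p i * R i = p i * ∏ j ∈ (univ.filter (fun j => m < j)).filter (fun j => j < i),
                (1 - p j) := by
            intro i _
            rw [Finset.filter_filter]
          rw [Finset.sum_congr rfl hfe, telescope p (univ.filter (fun j => m < j))]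
          have : (0:ℝ) ≤ ∏ j ∈ univ.filter (fun j => m < j), (1 - p j) :=
            Finset.prod_nonneg (fun j _ => h1p j)
          linarith
      _ = v' m * Qm := mul_one _
  have hsumnn : 0 ≤ ∑ i ∈ univ.filter (fun i => m < i), v' i * p i * (Qm * R i) := by
    apply Finset.sum_nonneg
    intro i hi
    simp only [Finset.mem_filter, Finset.mem_univ, true_and] at hi
    have hv'inn : 0 ≤ v' i := by rw [hvv' i (ne_of_gt hi)]; exact (hv i).1
    exact mul_nonneg (mul_nonneg hv'inn (hp i).1) (mul_nonneg hQmnn (hRnn i))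
  -- assemble
  have habs1 : |A - B| = p m * Qm * |v m - v' m| := by
    rw [step1, abs_mul, abs_of_nonneg (mul_nonneg (hp m).1 hQmnn)]
    ring
  have habs2 : |B - C| ≤ 2 * Qm * v' m * |p m - p' m| := by
    rw [step2]
    set S := ∑ i ∈ univ.filter (fun i => m < i), v' i * p i * (Qm * R i)
    calc |v' m * Qm * (p m - p' m) + (p' m - p m) * S|
        ≤ |v' m * Qm * (p m - p' m)| + |(p' m - p m) * S| := abs_add_le _ _
      _ = v' m * Qm * |p m - p' m| + S * |p m - p' m| := by
          simp only [abs_mul]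
          rw [abs_of_nonneg hv'm.1, abs_of_nonneg hQmnn,
            abs_of_nonneg hsumnn, abs_sub_comm (p' m) (p m)]
          ring
      _ ≤ v' m * Qm * |p m - p' m| + (v' m * Qm) * |p m - p' m| := by
          have := abs_nonneg (p m - p' m)
          nlinarith
      _ = 2 * Qm * v' m * |p m - p' m| := by ring
  calc |A - C| = |(A - B) + (B - C)| := by ring_nf
    _ ≤ |A - B| + |B - C| := abs_add_le _ _
    _ ≤ p m * Qm * |v m - v' m| + 2 * Qm * v' m * |p m - p' m| := by
        rw [habs1]; linarith
    _ = 2 * Qm * v' m * |p m - p' m| + (p m * Qm) * |v m - v' m| := by ring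
end
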